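/- For any two system-optimal flows f and g on a parallel-link network, the marginal cost cₑ'(fₑ) = lₑ(fₑ) + fₑ·lₑ'(fₑ) equals cₑ'(gₑ) for every link e. -/

import Mathlib

/-- If a differentiable function with continuous derivative is affine along the
segment from `a` to `b`, then its derivatives at `a` and `b` coincide. -/
lemma affine_on_seg_deriv_eq (c : ℝ → ℝ) (hc : Differentiable ℝ c)
    (hc' : Continuous (deriv c)) (a b : ℝ)
    (hab : ∀ t ∈ Set.Icc (0:ℝ) 1, c (a + t * (b - a)) = c a + t * (c b - c a)) :
    deriv c a = deriv c b := by
  rcases eq_or_ne a b with h | h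
  · rw [h]
  have key : ∀ t ∈ Set.Icc (0:ℝ) 1, deriv c (a + t * (b - a)) * (b - a) = c b - c a := by
    have hIoo : Set.EqOn (fun t : ℝ => deriv c (a + t * (b - a)) * (b - a))
        (fun _ : ℝ => c b - c a) (Set.Ioo 0 1) := by
      intro t ht
      have hnhds : Set.Icc (0:ℝ) 1 ∈ nhds t := Icc_mem_nhds ht.1 ht.2
      have hev : (fun u => c (a + u * (b - a)) - (c a + u * (c b - c a)))
          =ᶠ[nhds t] (fun _ => 0) := by
        filter_upwards [hnhds] with u hu
        rw [hab u hu]; ring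
      have hderiv0 : deriv (fun u => c (a + u * (b - a)) - (c a + u * (c b - c a))) t = 0 := by
        rw [hev.deriv_eq]; simp
      have h1 : HasDerivAt (fun u : ℝ => a + u * (b - a)) (b - a) t := by
        simpa using ((hasDerivAt_id t).mul_const (b - a)).const_add a
      have h2 : HasDerivAt (fun u => c (a + u * (b - a)))
          (deriv c (a + t * (b - a)) * (b - a)) t :=
        ((hc _).hasDerivAt).comp t h1
      have h3 : HasDerivAt (fun u : ℝ => c a + u * (c b - c a)) (c b - c a) t := by
        simpa using ((hasDerivAt_id t).mul_const (c b - c a)).const_add (c a)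
      have h4 := (h2.sub h3).deriv
      change deriv (fun u => c (a + u * (b - a)) - (c a + u * (c b - c a))) t = _ at h4
      rw [hderiv0] at h4
      show deriv c (a + t * (b - a)) * (b - a) = c b - c a
      linarith
    have hcont : Continuous (fun t : ℝ => deriv c (a + t * (b - a)) * (b - a)) :=
      (hc'.comp (by continuity)).mul continuous_const
    have hcl := hIoo.closure hcont continuous_const
    rw [closure_Ioo (by norm_num : (0:ℝ) ≠ 1)] at hcl
    exact hcl
  have h0 := key 0 (by norm_num)
  have h1 := key 1 (by norm_num)
  simp only [zero_mul, add_zero, one_mul] at h0 h1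
  have hb : a + (b - a) = b := by ring
  rw [hb] at h1
  have hba : b - a ≠ 0 := sub_ne_zero.mpr (Ne.symm h)
  exact mul_right_cancel₀ hba (h0.trans h1.symm)

/-- Any two system-optimal flows on a parallel-link network induce the same
marginal cost `cₑ'(fₑ) = lₑ(fₑ) + fₑ·lₑ'(fₑ)` on every link. -/
theorem SO_flows_equal_marginal_cost {E : Type*} [Fintype E]
    (l : E → ℝ → ℝ)
    (hl0 : ∀ e x, 0 ≤ l e x)
    (hldiff : ∀ e, Differentiable ℝ (l e))
    (hlderiv_cont : ∀ e, Continuous (deriv (l e)))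
    (hlmono : ∀ e, Monotone (l e))
    (hconv : ∀ e, ConvexOn ℝ (Set.Ici 0) (fun x => l e x * x))
    (r : ℝ) (f g : E → ℝ)
    (hf0 : ∀ e, 0 ≤ f e) (hg0 : ∀ e, 0 ≤ g e)
    (hfr : ∑ e, f e = r) (hgr : ∑ e, g e = r)
    (hfSO : ∀ h : E → ℝ, (∀ e, 0 ≤ h e) → ∑ e, h e = r →
      ∑ e, l e (f e) * f e ≤ ∑ e, l e (h e) * h e)
    (hgSO : ∀ h : E → ℝ, (∀ e, 0 ≤ h e) → ∑ e, h e = r →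
      ∑ e, l e (g e) * g e ≤ ∑ e, l e (h e) * h e) :
    ∀ e, l e (f e) + f e * deriv (l e) (f e) = l e (g e) + g e * deriv (l e) (g e) := by
  set c : E → ℝ → ℝ := fun e x => l e x * x with hc
  -- both optimal flows have the same total cost
  have hCfg : ∑ e, c e (f e) = ∑ e, c e (g e) :=
    le_antisymm (hfSO g hg0 hgr) (hgSO f hf0 hfr)
  -- along the segment between f and g, the per-link cost is affine
  have hseg : ∀ t ∈ Set.Icc (0:ℝ) 1, ∀ e,
      c e (f e + t * (g e - f e)) = (1 - t) * c e (f e) + t * c e (g e) := by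
    rintro t ⟨ht0, ht1⟩
    set h : E → ℝ := fun e => f e + t * (g e - f e) with hh
    have hh0 : ∀ e, 0 ≤ h e := by
      intro e
      have heq : h e = (1 - t) * f e + t * g e := by simp only [hh]; ring
      rw [heq]
      have := mul_nonneg (sub_nonneg.mpr ht1) (hf0 e)
      have := mul_nonneg ht0 (hg0 e)
      linarith
    have hhr : ∑ e, h e = r := by
      have : ∑ e, h e = ∑ e, f e + t * (∑ e, g e - ∑ e, f e) := by
        simp only [hh, Finset.sum_add_distrib, ← Finset.mul_sum, Finset.sum_sub_distrib]
      rw [this, hfr, hgr]; ring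
    have hconvE : ∀ e, c e (h e) ≤ (1 - t) * c e (f e) + t * c e (g e) := by
      intro e
      have key := (hconv e).2 (Set.mem_Ici.mpr (hf0 e)) (Set.mem_Ici.mpr (hg0 e))
        (sub_nonneg.mpr ht1) ht0 (by ring)
      have harg : (1 - t) • f e + t • g e = h e := by
        simp only [smul_eq_mul, hh]; ring
      rw [harg] at key
      simpa [hc, smul_eq_mul] using key
    have hsum_le : ∑ e, c e (h e) ≤ ∑ e, c e (f e) := by
      calc ∑ e, c e (h e) ≤ ∑ e, ((1 - t) * c e (f e) + t * c e (g e)) :=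
            Finset.sum_le_sum (fun e _ => hconvE e)
        _ = (1 - t) * ∑ e, c e (f e) + t * ∑ e, c e (g e) := by
            rw [Finset.sum_add_distrib, ← Finset.mul_sum, ← Finset.mul_sum]
        _ = ∑ e, c e (f e) := by rw [← hCfg]; ring
    have hsum_ge : ∑ e, c e (f e) ≤ ∑ e, c e (h e) := hfSO h hh0 hhr
    have hzero : ∀ e ∈ Finset.univ,
        ((1 - t) * c e (f e) + t * c e (g e)) - c e (h e) = 0 := by
      apply (Finset.sum_eq_zero_iff_of_nonneg
        (fun e _ => sub_nonneg.mpr (hconvE e))).mp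
      have hexp : ∑ e, (((1 - t) * c e (f e) + t * c e (g e)) - c e (h e))
          = ((1 - t) * ∑ e, c e (f e) + t * ∑ e, c e (g e)) - ∑ e, c e (h e) := by
        rw [Finset.sum_sub_distrib, Finset.sum_add_distrib, ← Finset.mul_sum, ← Finset.mul_sum]
      rw [hexp, ← hCfg]
      have : (1 - t) * ∑ e, c e (f e) + t * ∑ e, c e (f e) = ∑ e, c e (f e) := by ring
      rw [this]
      linarith
    intro e
    have := hzero e (Finset.mem_univ e)
    simp only [hh] at this ⊢
    linarith
  intro e
  have haff : ∀ t ∈ Set.Icc (0:ℝ) 1,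
      c e (f e + t * (g e - f e)) = c e (f e) + t * (c e (g e) - c e (f e)) := by
    intro t ht
    rw [hseg t ht e]; ring
  have hcd : Differentiable ℝ (c e) := (hldiff e).mul differentiable_id
  have hderiv_eq : deriv (c e) = fun y => deriv (l e) y * y + l e y := by
    funext y
    have := ((hldiff e y).hasDerivAt.mul (hasDerivAt_id y)).deriv
    show deriv (l e * id) y = _
    simpa [hc] using this
  have hcd' : Continuous (deriv (c e)) := by
    rw [hderiv_eq]
    exact ((hlderiv_cont e).mul continuous_id).add (hldiff e).continuous
  have hfin := affine_on_seg_deriv_eq (c e) hcd hcd' (f e) (g e) haff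
  rw [hderiv_eq] at hfin
  simp only at hfin
  linarith
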